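/- Let P ⊆ ℝ^d be a polytope, F a nonempty exposed face of P with F ≠ P, and a ∈ ℝ^d, b ∈ ℝ such that every extreme point v of P satisfies ⟨a,v⟩ < b if v ∈ F and ⟨a,v⟩ > b if v ∉ F; put Q = P ∩ {x : ⟨a,x⟩ ≥ b} (the truncation of P in the face F). Then the union of the normal cones N(Q,v) over all extreme points v of Q lying on the hyperplane {x : ⟨a,x⟩ = b} equals the union of the normal cones N(P,u) over all extreme points u of P contained in F. -/

import Mathlib

/-- The standard inner product on `ℝ^d`. -/
def dotp {d : ℕ} (u v : Fin d → ℝ) : ℝ := ∑ t, u t * v t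

/-- The normal cone of `X ⊆ ℝ^d` at a point `v`. -/
def normalCone {d : ℕ} (X : Set (Fin d → ℝ)) (v : Fin d → ℝ) : Set (Fin d → ℝ) :=
  {u | ∀ y ∈ X, dotp u y ≤ dotp u v}

lemma dotp_add_right {d : ℕ} (u x y : Fin d → ℝ) :
    dotp u (x + y) = dotp u x + dotp u y := by
  simp [dotp, mul_add, Finset.sum_add_distrib]

lemma dotp_smul_right {d : ℕ} (u : Fin d → ℝ) (c : ℝ) (x : Fin d → ℝ) :
    dotp u (c • x) = c * dotp u x := by
  simp only [dotp, Pi.smul_apply, smul_eq_mul]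
  rw [Finset.mul_sum]
  exact Finset.sum_congr rfl fun t _ => by ring

/-- `dotp u` as a continuous linear map. -/
noncomputable def dlin {d : ℕ} (u : Fin d → ℝ) : (Fin d → ℝ) →L[ℝ] ℝ :=
  LinearMap.toContinuousLinearMap
    { toFun := fun v => dotp u v
      map_add' := fun x y => dotp_add_right u x y
      map_smul' := fun c x => dotp_smul_right u c x }

@[simp] lemma dlin_apply {d : ℕ} (u v : Fin d → ℝ) : dlin u v = dotp u v := rfl

lemma dotp_isLinear {d : ℕ} (u : Fin d → ℝ) : IsLinearMap ℝ (dotp u) :=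
  ⟨fun x y => dotp_add_right u x y, fun c x => dotp_smul_right u c x⟩

lemma dotp_smul_add {d : ℕ} (u x y : Fin d → ℝ) (s t : ℝ) :
    dotp u (s • x + t • y) = s * dotp u x + t * dotp u y := by
  rw [dotp_add_right, dotp_smul_right, dotp_smul_right]

lemma dotp_sum {d : ℕ} (p : Fin d → ℝ) {ι : Type*} (s : Finset ι) (w : ι → ℝ)
    (f : ι → Fin d → ℝ) :
    dotp p (∑ i ∈ s, w i • f i) = ∑ i ∈ s, w i * dotp p (f i) := by
  classical
  induction s using Finset.induction with
  | empty => simp [dotp]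
  | insert _ _ h ih =>
    rw [Finset.sum_insert h, dotp_add_right, dotp_smul_right, ih, Finset.sum_insert h]

theorem stmt_10 (d : ℕ) (V : Set (Fin d → ℝ)) (hV : V.Finite) (hVne : V.Nonempty)
    (P : Set (Fin d → ℝ)) (hP : P = convexHull ℝ V)
    (G : Set (Fin d → ℝ)) (hG : IsExposed ℝ P G) (hGne : G.Nonempty) (hGP : G ≠ P)
    (a : Fin d → ℝ) (b : ℝ)
    (hsep : ∀ v ∈ P.extremePoints ℝ,
      (v ∈ G → dotp a v < b) ∧ (v ∉ G → b < dotp a v))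
    (Q : Set (Fin d → ℝ)) (hQ : Q = P ∩ {x | b ≤ dotp a x}) :
    {u | ∃ v, v ∈ Q.extremePoints ℝ ∧ dotp a v = b ∧ u ∈ normalCone Q v} =
      {u | ∃ w, w ∈ P.extremePoints ℝ ∧ w ∈ G ∧ u ∈ normalCone P w} := by
  classical
  have hPconv : Convex ℝ P := hP ▸ convex_convexHull ℝ V
  have hPcomp : IsCompact P := hP ▸ hV.isCompact_convexHull ℝ
  have hPne : P.Nonempty := ⟨hVne.some, hP ▸ subset_convexHull ℝ V hVne.some_mem⟩
  set E : Set (Fin d → ℝ) := P.extremePoints ℝ with hE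
  have hEV : E ⊆ V := by rw [hE, hP]; exact extremePoints_convexHull_subset
  have hEfin : E.Finite := hV.subset hEV
  have hEP : E ⊆ P := extremePoints_subset
  have hPE : P = convexHull ℝ E := by
    have h1 : closure (convexHull ℝ E) = P :=
      closure_convexHull_extremePoints hPcomp hPconv
    rw [← h1, (hEfin.isClosed_convexHull (𝕜 := ℝ)).closure_eq]
  have hQP : Q ⊆ P := by rw [hQ]; exact Set.inter_subset_left
  have hQconv : Convex ℝ Q := by
    rw [hQ]; exact hPconv.inter (convex_halfSpace_ge (dotp_isLinear a) b)
  have hQclosed : IsClosed {x : Fin d → ℝ | b ≤ dotp a x} := by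
    have h : {x : Fin d → ℝ | b ≤ dotp a x} = {x | (fun _ => b) x ≤ dlin a x} := by
      simp
    rw [h]
    exact isClosed_le continuous_const (dlin a).continuous
  have hQcomp : IsCompact Q := by
    rw [hQ]; exact hPcomp.inter_right hQclosed
  -- Q is nonempty: there is an extreme point outside G
  have hEG : ∃ s₀ ∈ E, s₀ ∉ G := by
    by_contra h
    push_neg at h
    have hPG : P ⊆ G := by
      rw [hPE]
      exact convexHull_min h (hG.convex hPconv)
    exact hGP (Set.Subset.antisymm (hG.subset) hPG)
  obtain ⟨s₀, hs₀E, hs₀G⟩ := hEG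
  have hs₀Q : s₀ ∈ Q := by
    rw [hQ]
    exact ⟨hEP hs₀E, le_of_lt ((hsep s₀ hs₀E).2 hs₀G)⟩
  have hQne : Q.Nonempty := ⟨s₀, hs₀Q⟩
  apply Set.Subset.antisymm
  · -- LHS ⊆ RHS
    rintro u ⟨v, hvQext, hvb, hvN⟩
    have hvQ : v ∈ Q := extremePoints_subset hvQext
    have hvP : v ∈ P := hQP hvQ
    obtain ⟨e₀, he₀s, he₀max⟩ := hEfin.toFinset.exists_max_image (fun e => dotp u e)
      (by rw [Set.Finite.toFinset_nonempty]; exact hPcomp.extremePoints_nonempty hPne)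
    rw [Set.Finite.mem_toFinset] at he₀s
    set c : ℝ := dotp u e₀ with hc
    have hEle : ∀ e ∈ E, dotp u e ≤ c := fun e he =>
      he₀max e (hEfin.mem_toFinset.2 he)
    have hPle : ∀ y ∈ P, dotp u y ≤ c := by
      intro y hy
      rw [hPE] at hy
      exact convexHull_min (fun e he => hEle e he)
        (convex_halfSpace_le (dotp_isLinear u) c) hy
    -- key claim: some extreme point in G attains c
    by_contra hcon
    have hnoG : ∀ e ∈ E, e ∈ G → dotp u e < c := by
      intro e heE heG
      rcases lt_or_eq_of_le (hEle e heE) with h | h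
      · exact h
      · exact absurd ⟨e, heE, heG, fun y hy => (hPle y hy).trans_eq h.symm⟩ hcon
    have he₀G : e₀ ∉ G := fun hG0 => lt_irrefl c (hnoG e₀ he₀s hG0)
    have he₀Q : e₀ ∈ Q := by
      rw [hQ]; exact ⟨hEP he₀s, le_of_lt ((hsep e₀ he₀s).2 he₀G)⟩
    have hvc : dotp u v = c := le_antisymm (hPle v hvP) (hvN e₀ he₀Q)
    set s := hEfin.toFinset with hs
    have hvmem : v ∈ convexHull ℝ (↑s : Set (Fin d → ℝ)) := by
      rw [hs, hEfin.coe_toFinset, ← hPE]; exact hvP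
    rw [Finset.convexHull_eq] at hvmem
    obtain ⟨wt, hwt0, hwt1, hwteq⟩ := hvmem
    have hvsum : v = ∑ y ∈ s, wt y • y := by
      rw [← hwteq, Finset.centerMass_eq_of_sum_1 _ id hwt1]
      simp
    have hvu : dotp u v = ∑ y ∈ s, wt y * dotp u y := by
      conv_lhs => rw [hvsum]
      simpa using dotp_sum u s wt id
    have hva : dotp a v = ∑ y ∈ s, wt y * dotp a y := by
      conv_lhs => rw [hvsum]
      simpa using dotp_sum a s wt id
    have hzero : ∑ y ∈ s, wt y * (c - dotp u y) = 0 := by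
      have h1 : ∑ y ∈ s, wt y * (c - dotp u y)
          = ∑ y ∈ s, (wt y * c - wt y * dotp u y) :=
        Finset.sum_congr rfl fun y _ => by ring
      rw [h1, Finset.sum_sub_distrib, ← Finset.sum_mul, hwt1, one_mul, ← hvu, hvc, sub_self]
    have hterm : ∀ y ∈ s, wt y * (c - dotp u y) = 0 :=
      (Finset.sum_eq_zero_iff_of_nonneg (fun y hy =>
        mul_nonneg (hwt0 y hy)
          (sub_nonneg.2 (hEle y (hEfin.mem_toFinset.1 hy))))).1 hzero
    have hbig : ∀ y ∈ s, wt y ≠ 0 → b < dotp a y := by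
      intro y hy hwy
      have h0 : dotp u y = c := by
        rcases mul_eq_zero.1 (hterm y hy) with h | h
        · exact absurd h hwy
        · linarith [sub_eq_zero.1 h]
      have hyE : y ∈ E := hEfin.mem_toFinset.1 hy
      have hyG : y ∉ G := fun hyG => absurd h0 (ne_of_lt (hnoG y hyE hyG))
      exact (hsep y hyE).2 hyG
    obtain ⟨y₀, hy₀s, hy₀⟩ := Finset.exists_ne_zero_of_sum_ne_zero
      (by rw [hwt1]; exact one_ne_zero)
    have hlt : b < dotp a v := by
      rw [hva]
      calc b = ∑ y ∈ s, wt y * b := by rw [← Finset.sum_mul, hwt1, one_mul]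
        _ < ∑ y ∈ s, wt y * dotp a y := by
          apply Finset.sum_lt_sum
          · intro i hi
            rcases eq_or_ne (wt i) 0 with h | h
            · simp [h]
            · have hwpos : 0 < wt i := lt_of_le_of_ne (hwt0 i hi) (Ne.symm h)
              exact le_of_lt (mul_lt_mul_of_pos_left (hbig i hi h) hwpos)
          · exact ⟨y₀, hy₀s,
              mul_lt_mul_of_pos_left (hbig y₀ hy₀s hy₀)
                (lt_of_le_of_ne (hwt0 y₀ hy₀s) (Ne.symm hy₀))⟩
    exact absurd hvb (ne_of_gt hlt)
  · -- RHS ⊆ LHS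
    rintro u ⟨w, hwE, hwG, hwN⟩
    have hwP : w ∈ P := hEP hwE
    have hwb : dotp a w < b := (hsep w hwE).1 hwG
    obtain ⟨x₀, hx₀Q, hx₀max⟩ :=
      hQcomp.exists_isMaxOn hQne (dlin u).continuous.continuousOn
    have hx₀max' : ∀ y ∈ Q, dotp u y ≤ dotp u x₀ := by
      intro y hy; simpa using hx₀max hy
    set M : Set (Fin d → ℝ) := {x ∈ Q | ∀ y ∈ Q, dlin u y ≤ dlin u x} with hM
    have hMexp : IsExposed ℝ Q M := fun _ => ⟨dlin u, rfl⟩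
    have hx₀M : x₀ ∈ M := ⟨hx₀Q, fun y hy => by simpa using hx₀max' y hy⟩
    -- construct a point z ∈ M on the hyperplane
    have hz : ∃ z ∈ M, dotp a z = b := by
      have hax₀ : b ≤ dotp a x₀ := (hQ ▸ hx₀Q).2
      rcases eq_or_lt_of_le hax₀ with h | h
      · exact ⟨x₀, hx₀M, h.symm⟩
      · set t : ℝ := (dotp a x₀ - b) / (dotp a x₀ - dotp a w) with ht
        have hden : 0 < dotp a x₀ - dotp a w := by linarith
        have ht0 : 0 < t := div_pos (by linarith) hden
        have ht1 : t ≤ 1 := by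
          rw [div_le_one hden]; linarith
        set z : Fin d → ℝ := (1 - t) • x₀ + t • w with hzdef
        have hzP : z ∈ P := hPconv (hQP hx₀Q) hwP (by linarith) (le_of_lt ht0) (by ring)
        have hzb : dotp a z = b := by
          rw [hzdef, dotp_smul_add]
          rw [ht]
          field_simp [hden.ne']
          ring
        have hzQ : z ∈ Q := by rw [hQ]; exact ⟨hzP, by rw [Set.mem_setOf_eq, hzb]⟩
        have hzu : dotp u x₀ ≤ dotp u z := by
          rw [hzdef, dotp_smul_add]
          have h1 : dotp u x₀ ≤ dotp u w := hwN x₀ (hQP hx₀Q)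
          nlinarith
        refine ⟨z, ⟨hzQ, fun y hy => ?_⟩, hzb⟩
        simp only [dlin_apply]
        exact (hx₀max' y hy).trans hzu
    obtain ⟨z, hzM, hzb⟩ := hz
    set M' : Set (Fin d → ℝ) := {x ∈ M | ∀ y ∈ M, (-(dlin a)) y ≤ (-(dlin a)) x} with hM'
    have hM'exp : IsExposed ℝ M M' := fun _ => ⟨-(dlin a), rfl⟩
    have hzM' : z ∈ M' := by
      refine ⟨hzM, fun y hy => ?_⟩
      have hyQ : y ∈ Q := hy.1
      have hby : b ≤ dotp a y := (hQ ▸ hyQ).2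
      simp only [ContinuousLinearMap.neg_apply, dlin_apply, neg_le_neg_iff]
      rw [hzb]; exact hby
    have hQM : IsExtreme ℝ Q M := hMexp.isExtreme
    have hMM' : IsExtreme ℝ M M' := hM'exp.isExtreme
    have htrans : IsExtreme ℝ Q M' := hQM.trans hMM'
    have hMclosed : IsClosed M := hMexp.isClosed hQcomp.isClosed
    have hM'closed : IsClosed M' := hM'exp.isClosed hMclosed
    have hM'comp : IsCompact M' := hQcomp.of_isClosed_subset hM'closed htrans.1
    obtain ⟨v, hv⟩ := hM'comp.extremePoints_nonempty ⟨z, hzM'⟩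
    have hvM' : v ∈ M' := extremePoints_subset hv
    have hvM : v ∈ M := hvM'.1
    have hvQ : v ∈ Q := hvM.1
    refine ⟨v, htrans.extremePoints_subset_extremePoints hv, ?_, ?_⟩
    · have h1 : b ≤ dotp a v := (hQ ▸ hvQ).2
      have h2 := hvM'.2 z hzM
      simp only [ContinuousLinearMap.neg_apply, dlin_apply, neg_le_neg_iff, hzb] at h2
      linarith
    · intro y hy
      simpa using hvM.2 y hy
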